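/- Let ι, P, M be finite index sets, let x : ι → ℝ with x_i > 0 for all i, let c : P → ℝ and c' : M → ℝ with c_j > 0 and c'_j > 0, and let a : ι × (P ⊕ M) → ℝ be exponents. Then the signomial inequality ∑_{j ∈ P} c_j·∏_{i ∈ ι} x_i^{a_{ij}} ≤ ∑_{j ∈ M} c'_j·∏_{i ∈ ι} x_i^{a_{ij}} holds if and only if there exist λ : P → ℝ and γ : M → ℝ with γ_j > 0 such that exp(∑_{i ∈ ι} a_{ij}·log x_i) ≤ λ_j for all j ∈ P, log γ_j ≤ ∑_{i ∈ ι} a_{ij}·log x_i for all j ∈ M, and ∑_{j ∈ P} c_j·λ_j ≤ ∑_{j ∈ M} c'_j·γ_j. -/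
import Mathlib


theorem signomial_constraint_exact_reformulation {ι P M : Type*}
    [Fintype ι] [Fintype P] [Fintype M]
    (x : ι → ℝ) (hx : ∀ i, 0 < x i)
    (c : P → ℝ) (hc : ∀ j, 0 < c j) (c' : M → ℝ) (hc' : ∀ j, 0 < c' j)
    (a : ι → P ⊕ M → ℝ) :
    (∑ j, c j * ∏ i, x i ^ a i (Sum.inl j) ≤ ∑ j, c' j * ∏ i, x i ^ a i (Sum.inr j)) ↔
    ∃ (lam : P → ℝ) (γ : M → ℝ), (∀ j, 0 < γ j) ∧
      (∀ j, Real.exp (∑ i, a i (Sum.inl j) * Real.log (x i)) ≤ lam j) ∧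
      (∀ j, Real.log (γ j) ≤ ∑ i, a i (Sum.inr j) * Real.log (x i)) ∧
      ∑ j, c j * lam j ≤ ∑ j, c' j * γ j := by
  have key : ∀ s : P ⊕ M, ∏ i, x i ^ a i s
      = Real.exp (∑ i, a i s * Real.log (x i)) := by
    intro s
    rw [Real.exp_sum]
    refine Finset.prod_congr rfl fun i _ => ?_
    rw [Real.rpow_def_of_pos (hx i), mul_comm]
  constructor
  · intro h
    refine ⟨fun j => Real.exp (∑ i, a i (Sum.inl j) * Real.log (x i)),
      fun j => Real.exp (∑ i, a i (Sum.inr j) * Real.log (x i)),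
      fun j => Real.exp_pos _, fun j => le_refl _,
      fun j => by rw [Real.log_exp], ?_⟩
    simpa only [key] using h
  · rintro ⟨lam, γ, hγ, hlam, hlog, hsum⟩
    calc ∑ j, c j * ∏ i, x i ^ a i (Sum.inl j)
        ≤ ∑ j, c j * lam j := by
          refine Finset.sum_le_sum fun j _ => ?_
          exact mul_le_mul_of_nonneg_left (by rw [key]; exact hlam j) (hc j).le
      _ ≤ ∑ j, c' j * γ j := hsum
      _ ≤ ∑ j, c' j * ∏ i, x i ^ a i (Sum.inr j) := by
          refine Finset.sum_le_sum fun j _ => ?_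
          refine mul_le_mul_of_nonneg_left ?_ (hc' j).le
          rw [key]
          exact (Real.log_le_iff_le_exp (hγ j)).mp (hlog j)
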